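/- arXiv:1610.02243 — 5 statements merged into one kernel-verified Lean document; each statement's English description precedes it below -/
import Mathlib

section
/- For every quiddity cycle with representative (c_1,...,c_n), the matrix product η(c_1)η(c_2)···η(c_n) equals −Id, where η(a) denotes the 2×2 integer matrix with rows (a,−1) and (1,0). -/
/-- One generating move of the dihedral action on finite sequences:
cyclic rotation by one, or reversal. -/
def dihStep (c d : List ℕ) : Prop := d = c.rotate 1 ∨ d = c.reverse

/-- The equivalence relation on finite sequences generated by cyclic
rotations and reversal (the dihedral group action). -/
def DihEquiv : List ℕ → List ℕ → Prop := Relation.EqvGen dihStep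

/-- The lists that are representatives of quiddity cycles: the smallest
dihedrally closed collection containing `(0,0)` and closed under the rule
`(c₁,…,cₙ) ↦ (c₁+1, 1, c₂+1, c₃, …, cₙ)`. -/
inductive IsQuiddity : List ℕ → Prop
  | base : IsQuiddity [0, 0]
  | dih {c d : List ℕ} : IsQuiddity c → dihStep c d → IsQuiddity d
  | grow {a b : ℕ} {t : List ℕ} : IsQuiddity (a :: b :: t) →
      IsQuiddity ((a + 1) :: 1 :: (b + 1) :: t)

/-- The (class of the) cycle `c` contains the finite sequence `d`:
some representative of `c` has `d` as a block of consecutive entries. -/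
def CycContains (c d : List ℕ) : Prop := ∃ c', DihEquiv c c' ∧ d <:+: c'

/-- The matrix `η(a)`. -/
def eta (a : ℤ) : Matrix (Fin 2) (Fin 2) ℤ := !![a, -1; 1, 0]

open Matrix

noncomputable def Smat : Matrix (Fin 2) (Fin 2) ℤ := !![1, 0; 0, -1]

lemma Smat_mul_Smat : Smat * Smat = 1 := by
  simp [Smat, Matrix.mul_fin_two, Matrix.one_fin_two]

lemma eta_transpose (a : ℤ) : (eta a)ᵀ = !![a, 1; -1, 0] := by
  ext i j
  fin_cases i <;> fin_cases j <;> simp [eta]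

lemma Smat_eta_Smat (a : ℤ) : Smat * (eta a)ᵀ * Smat = eta a := by
  rw [eta_transpose]
  simp [Smat, eta, Matrix.mul_fin_two]

lemma eta_isUnit (a : ℤ) : IsUnit (eta a) := by
  rw [Matrix.isUnit_iff_isUnit_det]
  simp [eta, Matrix.det_fin_two_of]

lemma eta_grow (a b : ℤ) : eta (a + 1) * eta 1 * eta (b + 1) = eta a * eta b := by
  simp only [eta]
  ext i j
  fin_cases i <;> fin_cases j <;>
    simp [Matrix.mul_apply, Fin.sum_univ_two] <;> ring

lemma rev_prod (l : List ℕ) :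
    ((l.map fun a : ℕ => eta (a : ℤ)).reverse).prod
      = Smat * ((l.map fun a : ℕ => eta (a : ℤ)).prod)ᵀ * Smat := by
  induction l with
  | nil => simpa using Smat_mul_Smat.symm
  | cons a t ih =>
      simp only [List.map_cons, List.reverse_cons, List.prod_append, List.prod_cons,
        List.prod_nil, mul_one, Matrix.transpose_mul]
      rw [ih]
      have h : (eta (a : ℤ))ᵀ * Smat = Smat * eta (a : ℤ) := by
        calc (eta (a : ℤ))ᵀ * Smat = Smat * (Smat * (eta (a : ℤ))ᵀ * Smat) := by
              rw [← mul_assoc, ← mul_assoc, Smat_mul_Smat, one_mul]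
          _ = Smat * eta (a : ℤ) := by rw [Smat_eta_Smat]
      simp only [mul_assoc]
      rw [h]

lemma quiddity_aux (c : List ℕ) (hc : IsQuiddity c) :
    (c.map fun a : ℕ => eta (a : ℤ)).prod = -1 := by
  induction hc with
  | base =>
      show eta 0 * (eta 0 * 1) = -1
      rw [mul_one]
      simp only [eta]
      ext i j
      fin_cases i <;> fin_cases j <;>
        simp [Matrix.mul_apply, Fin.sum_univ_two]
  | @dih c d _ hstep ih =>
      rcases hstep with h | h
      · subst h
        rw [List.map_rotate]
        cases hc2 : (c.map fun a : ℕ => eta (a : ℤ)) with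
        | nil => rw [hc2] at ih; simpa using ih
        | cons A T =>
            rw [hc2] at ih
            rw [List.rotate_cons_succ, List.rotate_zero, List.prod_append,
              List.prod_cons, List.prod_nil, mul_one]
            rw [List.prod_cons] at ih
            have hA : IsUnit A := by
              have : A ∈ (c.map fun a : ℕ => eta (a : ℤ)) := by rw [hc2]; simp
              obtain ⟨a, _, ha⟩ := List.mem_map.mp this
              rw [← ha]; exact eta_isUnit _
            obtain ⟨u, hu⟩ := hA
            have hB : T.prod = -(↑u⁻¹ : Matrix (Fin 2) (Fin 2) ℤ) := by
              have := congrArg (fun M => (↑u⁻¹ : Matrix (Fin 2) (Fin 2) ℤ) * M) ih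
              simpa [← hu, ← mul_assoc, Units.inv_mul, mul_neg, mul_one] using this
            rw [hB, ← hu, neg_mul, Units.inv_mul]
      · subst h
        rw [List.map_reverse, rev_prod, ih]
        rw [show ((-1 : Matrix (Fin 2) (Fin 2) ℤ))ᵀ = -1 by simp]
        rw [mul_neg, mul_one, neg_mul, Smat_mul_Smat]
  | @grow a b t _ ih =>
      simp only [List.map_cons, List.prod_cons] at *
      push_cast
      rw [← mul_assoc, ← mul_assoc, eta_grow, mul_assoc]
      exact ih

lemma coe_list_eq (c : List ℕ) :
    (do let a ← c; pure ((a : ℤ))) = c.map (fun a : ℕ => (a : ℤ)) := by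
  induction c with
  | nil => rfl
  | cons x t ih => simp_all [List.flatMap]

/-- For every quiddity cycle with representative `(c₁,…,cₙ)`, the product
`η(c₁)⋯η(cₙ)` equals `-Id`. -/
theorem quiddity_eta_prod (c : List ℕ) (hc : IsQuiddity c) :
    (c.map fun a => eta (a : ℤ)).prod = -1 := by
  rw [coe_list_eq, List.map_map]
  exact quiddity_aux c hc
end

section
/- If a quiddity cycle c has two cyclically consecutive entries both equal to 1 (in some, equivalently any, representative), then c is the class of (1,1,1). -/
/- ---------- auxiliary lemmas ---------- -/

lemma dihStep_perm {c d : List ℕ} (h : dihStep c d) : d.Perm c := by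
  rcases h with rfl | rfl
  · exact List.rotate_perm c 1
  · exact List.reverse_perm c

lemma dihEquiv_perm {c d : List ℕ} (h : DihEquiv c d) : c.Perm d := by
  induction h with
  | rel a b hab => exact (dihStep_perm hab).symm
  | refl a => exact List.Perm.refl a
  | symm a b _ ih => exact ih.symm
  | trans a b c _ _ ih1 ih2 => exact ih1.trans ih2

/-- `c` has two cyclically adjacent entries equal to 1. -/
def Adj (c : List ℕ) : Prop := ∃ i, [1, 1] <:+: c.rotate i

lemma adj_reverse {c : List ℕ} (h : Adj c) : Adj c.reverse := by
  obtain ⟨i, hi⟩ := h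
  refine ⟨c.length - i % c.length, ?_⟩
  rw [← List.reverse_rotate]
  have := List.reverse_infix.mpr hi
  simpa using this

lemma adj_rotate_iff {c : List ℕ} : Adj (c.rotate 1) ↔ Adj c := by
  constructor
  · rintro ⟨i, hi⟩
    exact ⟨1 + i, by rwa [List.rotate_rotate] at hi⟩
  · rintro ⟨i, hi⟩
    rcases eq_or_ne c [] with rfl | hc
    · simp at hi
    · refine ⟨i + c.length - 1, ?_⟩
      rw [List.rotate_rotate]
      have hlen : 0 < c.length := List.length_pos_iff.mpr hc
      have h1 : 1 + (i + c.length - 1) = i + c.length := by omega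
      rw [h1]
      have h2 : c.rotate (i + c.length) = c.rotate i := by
        rw [← List.rotate_rotate]
        conv_lhs => rw [show c.length = (c.rotate i).length from (List.length_rotate c i).symm]
        rw [List.rotate_length]
      rwa [h2]

lemma adj_iff_of_dihEquiv {c d : List ℕ} (h : DihEquiv c d) : Adj c ↔ Adj d := by
  induction h with
  | rel a b hab =>
    rcases hab with rfl | rfl
    · exact adj_rotate_iff.symm
    · constructor
      · exact adj_reverse
      · intro h; simpa using adj_reverse h
  | refl a => exact Iff.rfl
  | symm a b _ ih => exact ih.symm
  | trans a b c _ _ ih1 ih2 => exact ih1.trans ih2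

lemma infix_pair {x y : ℕ} {L : List ℕ} (h : [x, y] <:+: L) :
    ∃ j, j + 1 < L.length ∧ L[j]? = some x ∧ L[j + 1]? = some y := by
  obtain ⟨s, t, rfl⟩ := h
  have hlen : s.length + 1 < (s ++ [x, y] ++ t).length := by simp
  refine ⟨s.length, hlen, ?_, ?_⟩
  · rw [List.append_assoc, List.getElem?_append_right (le_refl s.length)]
    simp
  · rw [List.append_assoc, List.getElem?_append_right (by omega : s.length ≤ s.length + 1)]
    simp

lemma getElem?_rotate (l : List ℕ) (n k : ℕ) (h : k < l.length) :
    (l.rotate n)[k]? = l[(k + n) % l.length]? := by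
  have hn : 0 < l.length := by omega
  rw [List.getElem?_eq_getElem (by simpa using h),
      List.getElem?_eq_getElem (Nat.mod_lt _ hn)]
  simp [List.getElem_rotate]

lemma cyc_pos {d : List ℕ} (h : CycContains d [1, 1]) :
    ∃ i, i < d.length ∧ d[i]? = some 1 ∧ d[(i + 1) % d.length]? = some 1 := by
  obtain ⟨c', hdc', hinf⟩ := h
  have hadj : Adj d := (adj_iff_of_dihEquiv hdc').mpr ⟨0, by rwa [List.rotate_zero]⟩
  obtain ⟨i, hrot⟩ := hadj
  obtain ⟨j, hj, h1, h2⟩ := infix_pair hrot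
  have hjd : j + 1 < d.length := by simpa using hj
  have hn : 0 < d.length := by omega
  rw [getElem?_rotate d i j (by omega)] at h1
  rw [getElem?_rotate d i (j + 1) (by omega)] at h2
  refine ⟨(j + i) % d.length, Nat.mod_lt _ hn, h1, ?_⟩
  have hmod : ((j + i) % d.length + 1) % d.length = (j + 1 + i) % d.length := by
    rw [Nat.mod_add_mod]
    congr 1
    omega
  rw [hmod]
  exact h2

/-- adjacent 1s at positions j, j+1 give [1,1] as infix -/
lemma pair_infix {L : List ℕ} {j : ℕ} (hj : j + 1 < L.length)
    (h1 : L[j]? = some 1) (h2 : L[j + 1]? = some 1) : [1, 1] <:+: L := by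
  have hj0 : j < L.length := by omega
  rw [List.getElem?_eq_getElem hj0] at h1
  rw [List.getElem?_eq_getElem hj] at h2
  have hdrop : L.drop j = 1 :: 1 :: L.drop (j + 2) := by
    rw [List.drop_eq_getElem_cons hj0, List.drop_eq_getElem_cons hj]
    simp at h1 h2
    rw [h1, h2]
  have hpre : [1, 1] <+: L.drop j := ⟨L.drop (j + 2), by rw [hdrop]; rfl⟩
  exact hpre.isInfix.trans (List.drop_suffix j L).isInfix

lemma quiddity_zero {c : List ℕ} (hc : IsQuiddity c) (h0 : (0 : ℕ) ∈ c) :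
    DihEquiv c [0, 0] := by
  induction hc with
  | base => exact Relation.EqvGen.refl _
  | @dih c d hq hstep ih =>
    have h0c : (0 : ℕ) ∈ c := ((dihStep_perm hstep).mem_iff).mp h0
    exact Relation.EqvGen.trans _ _ _
      (Relation.EqvGen.symm _ _ (Relation.EqvGen.rel _ _ hstep)) (ih h0c)
  | @grow a b t hq ih =>
    have h0t : (0 : ℕ) ∈ t := by
      rcases List.mem_cons.mp h0 with h | h
      · omega
      rcases List.mem_cons.mp h with h | h
      · omega
      rcases List.mem_cons.mp h with h | h
      · omega
      · exact h
    have hz := ih (by simp [h0t])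
    have hlen := (dihEquiv_perm hz).length_eq
    simp at hlen
    rw [hlen] at h0t
    simp at h0t

/-- If a quiddity cycle has two cyclically consecutive entries both equal to `1`
(in some, equivalently any, representative), then it is the class of `(1,1,1)`. -/
theorem quiddity_ones_adjacent (c : List ℕ) (hc : IsQuiddity c)
    (h11 : CycContains c [1, 1]) : DihEquiv c [1, 1, 1] := by
  revert h11
  induction hc with
  | base =>
    intro h11
    obtain ⟨c', hdc', hinf⟩ := h11
    have h1 : (1 : ℕ) ∈ c' := hinf.subset (by simp)
    have h2 : (1 : ℕ) ∈ ([0, 0] : List ℕ) := (dihEquiv_perm hdc').mem_iff.mpr h1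
    simp at h2
  | @dih c d hq hstep ih =>
    intro h11
    obtain ⟨c', hdc', hinf⟩ := h11
    have hcd : DihEquiv c d := Relation.EqvGen.rel _ _ hstep
    have hcc : CycContains c [1, 1] := ⟨c', Relation.EqvGen.trans _ _ _ hcd hdc', hinf⟩
    exact Relation.EqvGen.trans _ _ _ (Relation.EqvGen.symm _ _ hcd) (ih hcc)
  | @grow a b t hq ih =>
    intro h11
    obtain ⟨i, hi, e1, e2⟩ := cyc_pos h11
    set d : List ℕ := (a + 1) :: 1 :: (b + 1) :: t with hd
    have hn : d.length = t.length + 3 := by simp [hd]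
    have key : a = 0 ∨ b = 0 ∨ [1, 1] <:+: t := by
      by_cases hw : i + 1 = d.length
      · left
        rw [hw, Nat.mod_self] at e2
        simp [hd] at e2
        omega
      · have hmod : (i + 1) % d.length = i + 1 := Nat.mod_eq_of_lt (by omega)
        rw [hmod] at e2
        match i with
        | 0 => left; simp [hd] at e1; omega
        | 1 => right; left; simp [hd] at e2; omega
        | 2 => right; left; simp [hd] at e1; omega
        | (k + 3) =>
          right; right
          have ht1 : t[k]? = some 1 := by simpa [hd] using e1
          have ht2 : t[k + 1]? = some 1 := by simpa [hd] using e2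
          exact pair_infix (by rw [hn] at hw hi; omega) ht1 ht2
    rcases key with h0 | h0 | hinf
    · have hz : DihEquiv (a :: b :: t) [0, 0] := quiddity_zero hq (by simp [h0])
      have hperm := dihEquiv_perm hz
      have hlen := hperm.length_eq
      simp at hlen
      subst hlen h0
      have hb : b = 0 := by
        have hmem : b ∈ ([0, 0] : List ℕ) := hperm.mem_iff.mp (by simp)
        simpa using hmem
      subst hb
      exact Relation.EqvGen.refl _
    · have hz : DihEquiv (a :: b :: t) [0, 0] := quiddity_zero hq (by simp [h0])
      have hperm := dihEquiv_perm hz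
      have hlen := hperm.length_eq
      simp at hlen
      subst hlen h0
      have ha : a = 0 := by
        have hmem : a ∈ ([0, 0] : List ℕ) := hperm.mem_iff.mp (by simp)
        simpa using hmem
      subst ha
      exact Relation.EqvGen.refl _
    · have hc11 : CycContains (a :: b :: t) [1, 1] :=
        ⟨a :: b :: t, Relation.EqvGen.refl _,
          hinf.trans ((List.suffix_cons b t).isInfix.trans (List.suffix_cons a (b :: t)).isInfix)⟩
      have hperm := dihEquiv_perm (ih hc11)
      have hlen := hperm.length_eq
      simp at hlen
      have h2t : 2 ≤ t.length := hinf.length_le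
      omega
end

section
/- Let (c_1,...,c_n) with n ≥ 3 be a representative of a quiddity cycle and let i be an index with c_i = 1. Then the sequence of length n−1 obtained by deleting the entry c_i and decreasing its two cyclically adjacent entries each by 1 (for interior i this is (c_1,...,c_{i−1}−1, c_{i+1}−1,...,c_n)) is a representative of a quiddity cycle. -/
open List

lemma dih_refl (c : List ℕ) : DihEquiv c c := Relation.EqvGen.refl c

lemma dih_trans {a b c : List ℕ} (h₁ : DihEquiv a b) (h₂ : DihEquiv b c) : DihEquiv a c :=
  Relation.EqvGen.trans a b c h₁ h₂

lemma dih_rotate (c : List ℕ) (k : ℕ) : DihEquiv c (c.rotate k) := by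
  induction k with
  | zero => simpa using dih_refl c
  | succ k ih =>
      refine dih_trans ih (Relation.EqvGen.rel _ _ (Or.inl ?_))
      rw [List.rotate_rotate]

lemma dih_swap (u v : List ℕ) : DihEquiv (u ++ v) (v ++ u) := by
  have := dih_rotate (u ++ v) u.length
  rwa [List.rotate_append_length_eq] at this

lemma dih_reverse (c : List ℕ) : DihEquiv c c.reverse :=
  Relation.EqvGen.rel _ _ (Or.inr rfl)

lemma quiddity_rotate {c : List ℕ} (h : IsQuiddity c) (k : ℕ) : IsQuiddity (c.rotate k) := by
  induction k with
  | zero => simpa using h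
  | succ k ih =>
      exact ih.dih (Or.inl (by rw [List.rotate_rotate]))

lemma quiddity_iff_of_dih {c d : List ℕ} (h : DihEquiv c d) :
    IsQuiddity c ↔ IsQuiddity d := by
  induction h with
  | rel x y hxy =>
      constructor
      · exact fun h => h.dih hxy
      · rcases hxy with h1 | h1
        · subst h1
          intro hy
          cases x with
          | nil => simpa using hy
          | cons a l =>
              have h2 := quiddity_rotate hy ((a :: l).length - 1)
              rwa [List.rotate_rotate,
                show 1 + ((a :: l).length - 1) = (a :: l).length by simp; omega,
                List.rotate_length] at h2
        · subst h1
          intro hy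
          have h2 := hy.dih (Or.inr rfl)
          rwa [List.reverse_reverse] at h2
  | refl x => exact Iff.rfl
  | symm _ _ _ ih => exact ih.symm
  | trans _ _ _ _ _ ih₁ ih₂ => exact ih₁.trans ih₂

lemma quiddity_dih {c d : List ℕ} (h : IsQuiddity c) (hd : DihEquiv c d) : IsQuiddity d :=
  (quiddity_iff_of_dih hd).1 h

lemma quiddity_swap {u v : List ℕ} (h : IsQuiddity (u ++ v)) : IsQuiddity (v ++ u) :=
  quiddity_dih h (dih_swap u v)

lemma quiddity_rearrange {l₁ l₂ : List ℕ} (u v : List ℕ) (h : IsQuiddity l₁)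
    (h₁ : l₁ = u ++ v) (h₂ : l₂ = v ++ u) : IsQuiddity l₂ := by
  subst h₁; subst h₂; exact quiddity_swap h

lemma dih_length {c d : List ℕ} (h : DihEquiv c d) : c.length = d.length := by
  induction h with
  | rel x y hxy => rcases hxy with h1 | h1 <;> subst h1 <;> simp
  | refl x => rfl
  | symm _ _ _ ih => exact ih.symm
  | trans _ _ _ _ _ ih₁ ih₂ => exact ih₁.trans ih₂

lemma dih_char {c d : List ℕ} (h : DihEquiv c d) : c ~r d ∨ c.reverse ~r d := by
  induction h with
  | rel x y hxy =>
      rcases hxy with h1 | h1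
      · exact Or.inl ⟨1, h1.symm⟩
      · exact Or.inr (h1 ▸ IsRotated.refl _)
  | refl x => exact Or.inl (IsRotated.refl x)
  | symm x y _ ih =>
      rcases ih with h1 | h1
      · exact Or.inl h1.symm
      · right
        have h2 := h1.reverse
        rw [List.reverse_reverse] at h2
        exact h2.symm
  | trans x y z _ _ ih₁ ih₂ =>
      rcases ih₁ with h1 | h1 <;> rcases ih₂ with h2 | h2
      · exact Or.inl (h1.trans h2)
      · exact Or.inr (h1.reverse.trans h2)
      · exact Or.inr (h1.trans h2)
      · left
        have h3 := h1.reverse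
        rw [List.reverse_reverse] at h3
        exact h3.trans h2

lemma quiddity_shape {c : List ℕ} (h : IsQuiddity c) :
    c = [0, 0] ∨ (3 ≤ c.length ∧ ∀ x ∈ c, 1 ≤ x) := by
  induction h with
  | base => exact Or.inl rfl
  | dih _ hstep ih =>
      rcases ih with h1 | ⟨hl, hp⟩
      · subst h1
        rcases hstep with h2 | h2 <;> subst h2 <;> exact Or.inl (by decide)
      · right
        rcases hstep with h2 | h2 <;> subst h2
        · exact ⟨by simpa using hl, fun x hx => hp x (by simpa using hx)⟩
        · exact ⟨by simpa using hl, fun x hx => hp x (by simpa using hx)⟩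
  | grow _ ih =>
      rcases ih with h1 | ⟨hl, hp⟩
      · obtain ⟨rfl, rfl, rfl⟩ : _ ∧ _ ∧ _ := by simpa using h1
        right
        refine ⟨by simp, ?_⟩
        intro x hx
        simp at hx
        omega
      · right
        refine ⟨by simp, ?_⟩
        intro x hx
        simp at hx
        rcases hx with rfl | rfl | rfl | hx
        · omega
        · omega
        · omega
        · exact hp x (by simp [hx])

lemma isRotated_exists {l l' : List ℕ} (h : l ~r l') : ∃ u v, l = u ++ v ∧ l' = v ++ u := by
  obtain ⟨n, hn, rfl⟩ := List.isRotated_iff_mod.1 h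
  exact ⟨l.take n, l.drop n, (l.take_append_drop n).symm,
    by rw [List.rotate_eq_drop_append_take hn]⟩

lemma getD_len (A B : List ℕ) (x : ℕ) : (A ++ x :: B).getD A.length 0 = x := by
  induction A with
  | nil => rfl
  | cons a A ih => simpa using ih

lemma set_len (A B : List ℕ) (x y : ℕ) : (A ++ x :: B).set A.length y = A ++ y :: B := by
  induction A with
  | nil => rfl
  | cons a A ih => simpa using ih

lemma erase_len (A B : List ℕ) (x : ℕ) : (A ++ x :: B).eraseIdx A.length = A ++ B := by
  induction A with
  | nil => rfl
  | cons a A ih => simpa using ih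
lemma grow_rot (a b : ℕ) (t : List ℕ) (hq : IsQuiddity (a :: b :: t))
    (ha : 1 ≤ a) (hb : 1 ≤ b)
    (ih : ∀ x y s, DihEquiv (a :: b :: t) ((x + 1) :: 1 :: (y + 1) :: s) →
      IsQuiddity (x :: y :: s))
    (x y : ℕ) (s : List ℕ)
    (hr : ((a + 1) :: 1 :: (b + 1) :: t) ~r ((x + 1) :: 1 :: (y + 1) :: s)) :
    IsQuiddity (x :: y :: s) := by
  obtain ⟨u, v, hc, hd⟩ := isRotated_exists hr
  rcases v with _ | ⟨v0, _ | ⟨v1, _ | ⟨v2, v'⟩⟩⟩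
  · -- v = [] : aligned
    simp only [List.append_nil, List.nil_append] at hc hd
    obtain ⟨rfl, rfl, rfl⟩ : a = x ∧ b = y ∧ t = s := by
      have he := hc.trans hd.symm
      simpa using he
    exact hq
  · -- v = [v0]
    exfalso
    simp only [List.singleton_append, List.cons.injEq] at hd
    obtain ⟨rfl, rfl⟩ := hd
    have h9 := congrArg (fun l => l.headD 0) hc
    simp at h9
    omega
  · -- v = [v0, v1]
    simp only [List.cons_append, List.nil_append, List.cons.injEq] at hd
    obtain ⟨rfl, rfl, rfl⟩ := hd
    simp only [List.cons_append, List.nil_append, List.cons.injEq] at hc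
    obtain ⟨hay, h2⟩ := hc
    obtain rfl : a = y := by omega
    rcases s with _ | ⟨s0, _ | ⟨s1, s'⟩⟩
    · exfalso
      have h9 := congrArg (fun l => l.getD 1 0) h2
      simp at h9
      omega
    · -- s = [s0] : n = 4 doubly overlapping case
      simp only [List.cons_append, List.nil_append, List.cons.injEq] at h2
      obtain ⟨rfl, hbx, rfl⟩ := h2
      obtain rfl : b = x := by omega
      obtain ⟨a', rfl⟩ : ∃ a', a = a' + 1 := ⟨a - 1, by omega⟩
      obtain ⟨b', rfl⟩ : ∃ b', b = b' + 1 := ⟨b - 1, by omega⟩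
      have h4 : IsQuiddity [b', a'] :=
        ih b' a' [] (by simpa using dih_swap [a' + 1] [b' + 1, 1])
      have h5 : IsQuiddity [a', b'] := quiddity_swap (u := [b']) (v := [a']) h4
      have h6 := h5.grow
      exact quiddity_rearrange [a' + 1, 1] [b' + 1] h6 rfl rfl
    · -- s = s0 :: s1 :: s'
      simp only [List.cons_append, List.nil_append, List.cons.injEq] at h2
      obtain ⟨rfl, rfl, rfl⟩ := h2
      obtain ⟨a', rfl⟩ : ∃ a', a = a' + 1 := ⟨a - 1, by omega⟩
      have h4 : IsQuiddity (x :: a' :: b :: s') :=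
        ih x a' (b :: s') (by simpa using dih_swap ((a' + 1) :: b :: s') [x + 1, 1])
      have h5 : IsQuiddity (a' :: b :: (s' ++ [x])) :=
        quiddity_rearrange [x] (a' :: b :: s') h4 rfl (by simp)
      have h6 := h5.grow
      exact quiddity_rearrange ((a' + 1) :: 1 :: (b + 1) :: s') [x] h6 (by simp) rfl
  · -- v = v0 :: v1 :: v2 :: v'
    simp only [List.cons_append, List.cons.injEq] at hd
    obtain ⟨rfl, rfl, rfl, rfl⟩ := hd
    rcases u with _ | ⟨u0, _ | ⟨u1, _ | ⟨u2, u'⟩⟩⟩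
    · -- u = []
      simp only [List.nil_append, List.cons.injEq] at hc
      obtain ⟨hax, -, hby, rfl⟩ := hc
      obtain rfl : a = x := by omega
      obtain rfl : b = y := by omega
      simpa using hq
    · -- u = [u0]
      exfalso
      have h9 := congrArg (fun l => l.getD 2 0) hc
      simp at h9
      omega
    · -- u = [u0, u1]
      simp only [List.cons_append, List.nil_append, List.cons.injEq] at hc
      obtain ⟨rfl, rfl, hbx, rfl⟩ := hc
      obtain rfl : b = x := by omega
      obtain ⟨b', rfl⟩ : ∃ b', b = b' + 1 := ⟨b - 1, by omega⟩
      have h4 : IsQuiddity (b' :: y :: (v' ++ [a])) :=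
        ih b' y (v' ++ [a]) (by simpa using dih_swap [a] ((b' + 1) :: 1 :: (y + 1) :: v'))
      have h5 : IsQuiddity (a :: b' :: y :: v') :=
        quiddity_rearrange (b' :: y :: v') [a] h4 (by simp) rfl
      have h6 := h5.grow
      exact quiddity_rearrange [a + 1, 1] ((b' + 1) :: y :: v') h6 rfl (by simp)
    · -- u = u0 :: u1 :: u2 :: u'
      simp only [List.cons_append, List.cons.injEq] at hc
      obtain ⟨rfl, rfl, rfl, rfl⟩ := hc
      have h4 : IsQuiddity (x :: y :: (v' ++ a :: b :: u')) :=
        ih x y (v' ++ a :: b :: u')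
          (by simpa using dih_swap (a :: b :: u') ((x + 1) :: 1 :: (y + 1) :: v'))
      have h5 : IsQuiddity (a :: b :: (u' ++ x :: y :: v')) :=
        quiddity_rearrange (x :: y :: v') (a :: b :: u') h4 (by simp) (by simp)
      have h6 := h5.grow
      exact quiddity_rearrange ((a + 1) :: 1 :: (b + 1) :: u') (x :: y :: v') h6
        (by simp) (by simp)
lemma remove_ear_core {c : List ℕ} (hc : IsQuiddity c) :
    ∀ x y s, DihEquiv c ((x + 1) :: 1 :: (y + 1) :: s) → IsQuiddity (x :: y :: s) := by
  induction hc with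
  | base =>
      intro x y s h
      have h2 := dih_length h
      simp at h2
  | dih _ hstep ih =>
      intro x y s hd
      exact ih x y s (dih_trans (Relation.EqvGen.rel _ _ hstep) hd)
  | grow hq ih =>
      intro x y s hd
      rename_i a b t
      rcases quiddity_shape hq with h0 | ⟨hl, hp⟩
      · -- a::b::t = [0,0], so c = [1,1,1]
        obtain ⟨rfl, rfl, rfl⟩ : a = 0 ∧ b = 0 ∧ t = ([] : List ℕ) := by simpa using h0
        have hrot : ((0 + 1) :: 1 :: (0 + 1) :: ([] : List ℕ)) ~r
            ((x + 1) :: 1 :: (y + 1) :: s) := by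
          rcases dih_char hd with h1 | h1
          · exact h1
          · simpa using h1
        have hlen := hrot.perm.length_eq
        simp at hlen
        obtain rfl : s = [] := by
          cases s with
          | nil => rfl
          | cons a l => simp at hlen
        have hx : x + 1 ∈ [0 + 1, 1, 0 + 1] := hrot.perm.mem_iff.2 (by simp)
        have hy : y + 1 ∈ [0 + 1, 1, 0 + 1] := hrot.perm.mem_iff.2 (by simp)
        simp at hx hy
        obtain rfl : x = 0 := by omega
        obtain rfl : y = 0 := by omega
        exact IsQuiddity.base
      · have ha : 1 ≤ a := hp a (by simp)
        have hb : 1 ≤ b := hp b (by simp)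
        rcases dih_char hd with h1 | h1
        · exact grow_rot a b t hq ha hb ih x y s h1
        · -- reverse branch
          have h2 : ((b + 1) :: 1 :: (a + 1) :: t.reverse) ~r
              (((a + 1) :: 1 :: (b + 1) :: t).reverse) := by
            refine ⟨3, ?_⟩
            have h3 := List.rotate_append_length_eq [b + 1, 1, a + 1] t.reverse
            simpa using h3
          have hq' : IsQuiddity (b :: a :: t.reverse) :=
            quiddity_rearrange t.reverse [b, a] (quiddity_dih hq (dih_reverse _))
              (by simp) rfl
          have hdih0 : DihEquiv (a :: b :: t) (b :: a :: t.reverse) :=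
            dih_trans (dih_reverse _) (by simpa using dih_swap t.reverse [b, a])
          exact grow_rot b a t.reverse hq' hb ha
            (fun x' y' s' hd' => ih x' y' s' (dih_trans hdih0 hd')) x y s (h2.trans h1)
lemma getD_at (A B : List ℕ) (x j : ℕ) (h : j = A.length) :
    (A ++ x :: B).getD j 0 = x := by subst h; exact getD_len A B x

lemma set_at (A B : List ℕ) (x y j : ℕ) (h : j = A.length) :
    (A ++ x :: B).set j y = A ++ y :: B := by subst h; exact set_len A B x y

lemma erase_at (A B : List ℕ) (x j : ℕ) (h : j = A.length) :
    (A ++ x :: B).eraseIdx j = A ++ B := by subst h; exact erase_len A B x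

/-- Removing an ear: if `(c₁,…,cₙ)` (with `n ≥ 3`) represents a quiddity cycle and
`cᵢ = 1`, then deleting the entry `cᵢ` and decreasing its two cyclically adjacent
entries each by `1` yields again a representative of a quiddity cycle. -/
theorem quiddity_remove_ear (c : List ℕ) (hc : IsQuiddity c) (hn : 3 ≤ c.length)
    (i : ℕ) (hi : i < c.length) (hear : c.getD i 0 = 1) :
    IsQuiddity
      (((c.set ((i + 1) % c.length) (c.getD ((i + 1) % c.length) 0 - 1)).set
          ((i + c.length - 1) % c.length)
          (c.getD ((i + c.length - 1) % c.length) 0 - 1)).eraseIdx i) := by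
  have hpos : ∀ z ∈ c, 1 ≤ z := by
    rcases quiddity_shape hc with h0 | ⟨-, hp⟩
    · rw [h0] at hn; simp at hn
    · exact hp
  have hdec : c = c.take i ++ c.getD i 0 :: c.drop (i + 1) := by
    rw [List.getD_eq_getElem c 0 hi, ← List.drop_eq_getElem_cons hi, List.take_append_drop]
  rw [hear] at hdec
  have hA0 : (c.take i).length = i := by rw [List.length_take]; omega
  obtain ⟨A, B, hA, rfl⟩ : ∃ A B, A.length = i ∧ c = A ++ 1 :: B :=
    ⟨c.take i, c.drop (i + 1), hA0, hdec⟩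
  subst hA
  clear hdec hA0 hi hear
  rcases List.eq_nil_or_concat A with rfl | ⟨A₂, p, rfl⟩
  · -- i = 0
    rcases B with _ | ⟨q, B1⟩
    · simp at hn
    rcases List.eq_nil_or_concat B1 with rfl | ⟨B₂, p, rfl⟩
    · simp at hn
    simp only [List.concat_eq_append, List.nil_append, List.length_nil, Nat.zero_add]
      at hc hn hpos ⊢
    have e1 : 1 % (1 :: q :: (B₂ ++ [p])).length = 1 :=
      Nat.mod_eq_of_lt (by simp only [List.length_cons] <;> omega)
    have e2 : ((1 :: q :: (B₂ ++ [p])).length - 1) % (1 :: q :: (B₂ ++ [p])).length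
        = B₂.length + 2 := by
      rw [show (1 :: q :: (B₂ ++ [p])).length - 1 = B₂.length + 2 by
        simp only [List.length_cons, List.length_append, List.length_nil] <;> omega]
      exact Nat.mod_eq_of_lt
        (by simp only [List.length_cons, List.length_append, List.length_nil] <;> omega)
    rw [e1, e2]
    have g1 : (1 :: q :: (B₂ ++ [p])).getD 1 0 = q := rfl
    have g2 : (1 :: q :: (B₂ ++ [p])).getD (B₂.length + 2) 0 = p := by
      simpa using getD_at (1 :: q :: B₂) [] p (B₂.length + 2)
        (by simp only [List.length_cons] <;> omega)
    have s1 : (1 :: q :: (B₂ ++ [p])).set 1 (q - 1) = 1 :: (q - 1) :: (B₂ ++ [p]) := rfl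
    have s2 : (1 :: (q - 1) :: (B₂ ++ [p])).set (B₂.length + 2) (p - 1)
        = 1 :: (q - 1) :: (B₂ ++ [p - 1]) := by
      simpa using set_at (1 :: (q - 1) :: B₂) [] p (p - 1) (B₂.length + 2)
        (by simp only [List.length_cons] <;> omega)
    rw [g1, g2, s1, s2, List.eraseIdx_cons_zero]
    obtain ⟨q', rfl⟩ : ∃ q', q = q' + 1 := ⟨q - 1, by have := hpos q (by simp); omega⟩
    obtain ⟨p', rfl⟩ : ∃ p', p = p' + 1 := ⟨p - 1, by have := hpos p (by simp); omega⟩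
    simp only [Nat.add_sub_cancel]
    have h4 : IsQuiddity (p' :: q' :: B₂) :=
      remove_ear_core hc p' q' B₂ (by simpa using dih_swap (1 :: (q' + 1) :: B₂) [p' + 1])
    exact quiddity_rearrange [p'] (q' :: B₂) h4 rfl (by simp)
  · rcases B with _ | ⟨q, B₂⟩
    · -- i = length - 1
      rcases A₂ with _ | ⟨q, A₂⟩
      · simp at hn
      simp only [List.concat_eq_append, List.cons_append, List.nil_append, List.append_assoc]
        at hc hn hpos ⊢
      have e1 : ((q :: (A₂ ++ [p])).length + 1) % (q :: (A₂ ++ [p, 1])).length = 0 := by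
        rw [show (q :: (A₂ ++ [p])).length + 1 = (q :: (A₂ ++ [p, 1])).length by
          simp only [List.length_cons, List.length_append, List.length_nil] <;> omega]
        exact Nat.mod_self _
      have e2 : ((q :: (A₂ ++ [p])).length + (q :: (A₂ ++ [p, 1])).length - 1) %
          (q :: (A₂ ++ [p, 1])).length = A₂.length + 1 := by
        rw [show (q :: (A₂ ++ [p])).length + (q :: (A₂ ++ [p, 1])).length - 1
            = (A₂.length + 1) + (q :: (A₂ ++ [p, 1])).length by
          simp only [List.length_cons, List.length_append, List.length_nil] <;> omega,
          Nat.add_mod_right]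
        exact Nat.mod_eq_of_lt
          (by simp only [List.length_cons, List.length_append, List.length_nil] <;> omega)
      rw [e1, e2, show (q :: (A₂ ++ [p])).length = A₂.length + 2 by
        simp only [List.length_cons, List.length_append, List.length_nil] <;> omega]
      have g1 : (q :: (A₂ ++ [p, 1])).getD 0 0 = q := rfl
      have g2 : (q :: (A₂ ++ [p, 1])).getD (A₂.length + 1) 0 = p := by
        simpa using getD_at (q :: A₂) [1] p (A₂.length + 1)
          (by simp only [List.length_cons] <;> omega)
      have s1 : (q :: (A₂ ++ [p, 1])).set 0 (q - 1) = (q - 1) :: (A₂ ++ [p, 1]) := rfl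
      have s2 : ((q - 1) :: (A₂ ++ [p, 1])).set (A₂.length + 1) (p - 1)
          = (q - 1) :: (A₂ ++ [p - 1, 1]) := by
        simpa using set_at ((q - 1) :: A₂) [1] p (p - 1) (A₂.length + 1)
          (by simp only [List.length_cons] <;> omega)
      have er : ((q - 1) :: (A₂ ++ [p - 1, 1])).eraseIdx (A₂.length + 2)
          = (q - 1) :: (A₂ ++ [p - 1]) := by
        simpa using erase_at ((q - 1) :: (A₂ ++ [p - 1])) [] 1 (A₂.length + 2)
          (by simp only [List.length_cons, List.length_append, List.length_nil] <;> omega)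
      rw [g1, g2, s1, s2, er]
      obtain ⟨q', rfl⟩ : ∃ q', q = q' + 1 := ⟨q - 1, by have := hpos q (by simp); omega⟩
      obtain ⟨p', rfl⟩ : ∃ p', p = p' + 1 := ⟨p - 1, by have := hpos p (by simp); omega⟩
      simp only [Nat.add_sub_cancel]
      have h4 : IsQuiddity (p' :: q' :: A₂) :=
        remove_ear_core hc p' q' A₂
          (by simpa using dih_swap ((q' + 1) :: A₂) [p' + 1, 1])
      exact quiddity_rearrange [p'] (q' :: A₂) h4 rfl (by simp)
    · -- middle
      simp only [List.concat_eq_append, List.cons_append, List.nil_append, List.append_assoc]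
        at hc hn hpos ⊢
      have e1 : ((A₂ ++ [p]).length + 1) % (A₂ ++ p :: 1 :: q :: B₂).length
          = A₂.length + 2 := by
        rw [Nat.mod_eq_of_lt
          (by simp only [List.length_cons, List.length_append, List.length_nil] <;> omega)]
        simp only [List.length_append, List.length_cons, List.length_nil] <;> omega
      have e2 : ((A₂ ++ [p]).length + (A₂ ++ p :: 1 :: q :: B₂).length - 1) %
          (A₂ ++ p :: 1 :: q :: B₂).length = A₂.length := by
        rw [show (A₂ ++ [p]).length + (A₂ ++ p :: 1 :: q :: B₂).length - 1
            = A₂.length + (A₂ ++ p :: 1 :: q :: B₂).length by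
          simp only [List.length_cons, List.length_append, List.length_nil] <;> omega,
          Nat.add_mod_right]
        exact Nat.mod_eq_of_lt
          (by simp only [List.length_cons, List.length_append, List.length_nil] <;> omega)
      rw [e1, e2, show (A₂ ++ [p]).length = A₂.length + 1 by
        simp only [List.length_append, List.length_cons, List.length_nil]]
      have g1 : (A₂ ++ p :: 1 :: q :: B₂).getD (A₂.length + 2) 0 = q := by
        simpa using getD_at (A₂ ++ [p, 1]) B₂ q (A₂.length + 2)
          (by simp only [List.length_cons, List.length_append, List.length_nil] <;> omega)
      have g2 : (A₂ ++ p :: 1 :: q :: B₂).getD A₂.length 0 = p :=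
        getD_at A₂ (1 :: q :: B₂) p A₂.length rfl
      have s1 : (A₂ ++ p :: 1 :: q :: B₂).set (A₂.length + 2) (q - 1)
          = A₂ ++ p :: 1 :: (q - 1) :: B₂ := by
        simpa using set_at (A₂ ++ [p, 1]) B₂ q (q - 1) (A₂.length + 2)
          (by simp only [List.length_cons, List.length_append, List.length_nil] <;> omega)
      have s2 : (A₂ ++ p :: 1 :: (q - 1) :: B₂).set A₂.length (p - 1)
          = A₂ ++ (p - 1) :: 1 :: (q - 1) :: B₂ :=
        set_at A₂ (1 :: (q - 1) :: B₂) p (p - 1) A₂.length rfl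
      have er : (A₂ ++ (p - 1) :: 1 :: (q - 1) :: B₂).eraseIdx (A₂.length + 1)
          = A₂ ++ (p - 1) :: (q - 1) :: B₂ := by
        simpa using erase_at (A₂ ++ [p - 1]) ((q - 1) :: B₂) 1 (A₂.length + 1)
          (by simp only [List.length_cons, List.length_append, List.length_nil] <;> omega)
      rw [g1, g2, s1, s2, er]
      obtain ⟨q', rfl⟩ : ∃ q', q = q' + 1 := ⟨q - 1, by have := hpos q (by simp); omega⟩
      obtain ⟨p', rfl⟩ : ∃ p', p = p' + 1 := ⟨p - 1, by have := hpos p (by simp); omega⟩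
      simp only [Nat.add_sub_cancel]
      have h4 : IsQuiddity (p' :: q' :: (B₂ ++ A₂)) :=
        remove_ear_core hc p' q' (B₂ ++ A₂)
          (by simpa using dih_swap A₂ ((p' + 1) :: 1 :: (q' + 1) :: B₂))
      exact quiddity_rearrange (p' :: q' :: B₂) A₂ h4 (by simp) (by simp)
end

section
/- If c = (c_1,...,c_n) is a representative of a quiddity cycle, then either c is one of the sequences (0,0), (1,1,1), (1,2,1,2), (2,1,2,1), (2,1,3,1,2), or one of the (non-cyclic) sequences (c_2,...,c_{n−1}) or (c_{n−1},...,c_2) contains, as a consecutive subsequence, one of the nine sequences (1,2,2), (1,2,3), (1,2,4), (2,1,3), (2,1,4), (2,1,5), (3,1,4), (3,1,5), (1,3,1,3). -/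
namespace QuidAux

lemma rot1 {c : List ℕ} (h : IsQuiddity c) : IsQuiddity (c.rotate 1) :=
  h.dih (Or.inl rfl)

lemma rev {c : List ℕ} (h : IsQuiddity c) : IsQuiddity c.reverse :=
  h.dih (Or.inr rfl)

lemma swap {s t : List ℕ} (h : IsQuiddity (s ++ t)) : IsQuiddity (t ++ s) := by
  induction s generalizing t with
  | nil => simpa using h
  | cons x s ih =>
    have h1 : IsQuiddity (s ++ (t ++ [x])) := by
      have h2 := rot1 h
      have h3 : ((x :: (s ++ t)).rotate 1) = (s ++ t) ++ [x] := by
        have := List.rotate_cons_succ (s ++ t) x 0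
        simpa using this
      rw [show x :: s ++ t = x :: (s ++ t) from rfl, h3] at h2
      simpa [List.append_assoc] using h2
    have := ih (t := t ++ [x]) h1
    simpa [List.append_assoc] using this

lemma growAny {l r : List ℕ} {a b : ℕ} (h : IsQuiddity (l ++ a :: b :: r)) :
    IsQuiddity (l ++ (a + 1) :: 1 :: (b + 1) :: r) := by
  have h1 : IsQuiddity ((a :: b :: r) ++ l) := swap h
  have h2 : IsQuiddity (a :: b :: (r ++ l)) := by simpa using h1
  have h3 := h2.grow
  have h4 : IsQuiddity (((a + 1) :: 1 :: (b + 1) :: r) ++ l) := by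
    simpa [List.append_assoc] using h3
  exact swap h4

lemma two_le_length {c : List ℕ} (h : IsQuiddity c) : 2 ≤ c.length := by
  induction h with
  | base => simp
  | dih _ hd ih => rcases hd with rfl | rfl <;> simpa
  | grow _ _ => simp

lemma eq_of_length_two {c : List ℕ} (h : IsQuiddity c) (hl : c.length = 2) :
    c = [0, 0] := by
  induction h with
  | base => rfl
  | dih _ hd ih =>
    rcases hd with rfl | rfl
    · rw [List.length_rotate] at hl; rw [ih hl]; rfl
    · rw [List.length_reverse] at hl; rw [ih hl]; rfl
  | grow _ _ => simp at hl

/-- Splitting structure: `c` is assembled from two smaller quiddities glued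
along a triangle sitting on the edge between the last and first entries. -/
def Sp (c : List ℕ) : Prop :=
  ∃ (uh ul vh vl : ℕ) (um vm : List ℕ),
    IsQuiddity (uh :: (um ++ [ul])) ∧ IsQuiddity (vh :: (vm ++ [vl])) ∧
    c = (uh + 1) :: (um ++ (ul + vh + 1) :: (vm ++ [vl + 1]))

lemma sp_reverse {c : List ℕ} (h : Sp c) : Sp c.reverse := by
  obtain ⟨uh, ul, vh, vl, um, vm, hu, hv, rfl⟩ := h
  refine ⟨vl, vh, ul, uh, vm.reverse, um.reverse, ?_, ?_, ?_⟩
  · have := rev hv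
    simpa using this
  · have := rev hu
    simpa using this
  · simp [List.reverse_append]
    omega

end QuidAux

namespace QuidAux

lemma surgery {a b : ℕ} {t1 t2 : List ℕ} (h : Sp (t2 ++ a :: b :: t1)) :
    Sp (t2 ++ (a + 1) :: 1 :: (b + 1) :: t1) := by
  obtain ⟨uh, ul, vh, vl, um, vm, hu, hv, heq⟩ := h
  rcases t2 with _ | ⟨h2, t2'⟩
  · simp only [List.nil_append] at heq ⊢
    injection heq with ha htail
    subst ha
    rcases um with _ | ⟨m1, um2⟩
    · simp only [List.nil_append] at htail hu
      injection htail with hb ht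
      subst hb; subst ht
      refine ⟨uh + 1, ul + 1, vh, vl, [1], vm, ?_, hv, ?_⟩
      · have := hu.grow
        simpa using this
      · simp [List.cons_append]; omega
    · simp only [List.cons_append] at htail
      injection htail with hb ht
      subst hb; subst ht
      refine ⟨uh + 1, ul, vh, vl, 1 :: (b + 1) :: um2, vm, ?_, hv, ?_⟩
      · have hu' : IsQuiddity (uh :: b :: (um2 ++ [ul])) := by
          simpa [List.cons_append] using hu
        have := hu'.grow
        simpa [List.cons_append] using this
      · simp [List.cons_append]
  · simp only [List.cons_append] at heq ⊢
    injection heq with hh hrest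
    subst hh
    rcases List.append_eq_append_iff.mp hrest with ⟨k, hum, hk⟩ | ⟨k, ht2', hk⟩
    · -- um = t2' ++ k,  a :: b :: t1 = k ++ (ul+vh+1) :: (vm ++ [vl+1])
      rcases k with _ | ⟨k1, k2⟩
      · simp only [List.nil_append] at hk
        simp only [List.append_nil] at hum
        subst hum
        injection hk with ha htail
        subst ha
        rcases vm with _ | ⟨v1, vm2⟩
        · simp only [List.nil_append] at htail hv
          injection htail with hb ht
          subst hb; subst ht
          refine ⟨uh, ul, vh + 1, vl + 1, um, [1], hu, ?_, ?_⟩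
          · have := hv.grow
            simpa using this
          · simp [List.cons_append]; omega
        · simp only [List.cons_append] at htail
          injection htail with hb ht
          subst hb; subst ht
          refine ⟨uh, ul, vh + 1, vl, um, 1 :: (b + 1) :: vm2, hu, ?_, ?_⟩
          · have hv' : IsQuiddity (vh :: b :: (vm2 ++ [vl])) := by
              simpa [List.cons_append] using hv
            have := hv'.grow
            simpa [List.cons_append] using this
          · simp [List.cons_append]; omega
      · simp only [List.cons_append] at hk
        injection hk with ha htail
        subst ha
        rcases k2 with _ | ⟨k21, k22⟩
        · simp only [List.nil_append] at htail
          injection htail with hb ht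
          subst hb; subst ht
          subst hum
          refine ⟨uh, ul + 1, vh, vl, t2' ++ [a + 1, 1], vm, ?_, hv, ?_⟩
          · have hu' : IsQuiddity ((uh :: t2') ++ a :: ul :: []) := by
              simpa [List.cons_append, List.append_assoc] using hu
            have := growAny hu'
            simpa [List.cons_append, List.append_assoc] using this
          · simp [List.cons_append, List.append_assoc]; omega
        · simp only [List.cons_append] at htail
          injection htail with hb ht
          subst hb; subst ht
          subst hum
          refine ⟨uh, ul, vh, vl, t2' ++ (a + 1) :: 1 :: (b + 1) :: k22, vm, ?_, hv, ?_⟩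
          · have hu' : IsQuiddity ((uh :: t2') ++ a :: b :: (k22 ++ [ul])) := by
              simpa [List.cons_append, List.append_assoc] using hu
            have := growAny hu'
            simpa [List.cons_append, List.append_assoc] using this
          · simp [List.cons_append, List.append_assoc]
    · -- ht2' : t2' = um ++ k,  hk : (ul+vh+1) :: (vm ++ [vl+1]) = k ++ a :: b :: t1
      rcases k with _ | ⟨k1, k2⟩
      · simp only [List.nil_append] at hk
        simp only [List.append_nil] at ht2'
        subst ht2'
        injection hk with ha htail
        subst ha
        rcases vm with _ | ⟨v1, vm2⟩
        · simp only [List.nil_append] at htail hv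
          injection htail with hb ht
          subst hb; subst ht
          refine ⟨uh, ul, vh + 1, vl + 1, t2', [1], hu, ?_, ?_⟩
          · have := hv.grow
            simpa using this
          · simp [List.cons_append]; omega
        · simp only [List.cons_append] at htail
          injection htail with hb ht
          subst hb; subst ht
          refine ⟨uh, ul, vh + 1, vl, t2', 1 :: (v1 + 1) :: vm2, hu, ?_, ?_⟩
          · have hv' : IsQuiddity (vh :: v1 :: (vm2 ++ [vl])) := by
              simpa [List.cons_append] using hv
            have := hv'.grow
            simpa [List.cons_append] using this
          · simp [List.cons_append]; omega
      · simp only [List.cons_append] at hk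
        injection hk with hk1 hk2
        subst hk1
        subst ht2'
        rcases List.append_eq_append_iff.mp hk2 with ⟨j, hk2', hj⟩ | ⟨j, hvm, hj⟩
        · rcases j with _ | ⟨j1, j2⟩
          · simp at hj
          · simp at hj
        · rcases j with _ | ⟨j1, j2⟩
          · simp at hj
          · simp only [List.cons_append] at hj
            injection hj with ha htail
            subst ha
            rcases j2 with _ | ⟨j21, j22⟩
            · simp only [List.nil_append] at htail
              injection htail with hb ht
              subst hb; subst ht
              subst hvm
              refine ⟨uh, ul, vh, vl + 1, um, k2 ++ [a + 1, 1], hu, ?_, ?_⟩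
              · have hv' : IsQuiddity ((vh :: k2) ++ a :: vl :: []) := by
                  simpa [List.cons_append, List.append_assoc] using hv
                have := growAny hv'
                simpa [List.cons_append, List.append_assoc] using this
              · simp [List.cons_append, List.append_assoc]
            · simp only [List.cons_append] at htail
              injection htail with hb ht
              subst hb; subst ht
              subst hvm
              refine ⟨uh, ul, vh, vl, um, k2 ++ (a + 1) :: 1 :: (b + 1) :: j22, hu, ?_, ?_⟩
              · have hv' : IsQuiddity ((vh :: k2) ++ a :: b :: (j22 ++ [vl])) := by
                  simpa [List.cons_append, List.append_assoc] using hv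
                have := growAny hv'
                simpa [List.cons_append, List.append_assoc] using this
              · simp [List.cons_append, List.append_assoc]

end QuidAux

namespace QuidAux

lemma sp_triv : Sp [1, 1, 1] := by
  refine ⟨0, 0, 0, 0, [], [], ?_, ?_, by simp⟩ <;> simpa using IsQuiddity.base

lemma split_all {c : List ℕ} (h : IsQuiddity c) :
    ∀ s t : List ℕ, c = s ++ t → 3 ≤ c.length → Sp (t ++ s) := by
  induction h with
  | base =>
    intro s t hst hl
    simp at hl
  | @dih c d hq hd ih =>
    rcases hd with rfl | rfl
    · intro s t hst hl
      rcases c with _ | ⟨x, c0⟩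
      · simp at hl
      · have hrot : (x :: c0).rotate 1 = c0 ++ [x] := by
          simpa using List.rotate_cons_succ c0 x 0
        rw [hrot] at hst hl
        have hl' : 3 ≤ (x :: c0).length := by
          simpa using hl
        rcases List.append_eq_append_iff.mp hst.symm with ⟨a', hc0, ht⟩ | ⟨c', hs, ht⟩
        · subst hc0; subst ht
          have := ih (x :: s) a' (by simp) hl'
          simpa [List.append_assoc] using this
        · rcases c' with _ | ⟨y, ys⟩
          · simp only [List.nil_append] at ht
            simp only [List.append_nil] at hs
            subst hs; subst ht
            have := ih (x :: s) [] (by simp) hl'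
            simpa using this
          · simp only [List.cons_append] at ht
            injection ht with hy hys
            subst hy
            rcases List.append_eq_nil_iff.mp hys.symm with ⟨h1, h2⟩
            subst h1; subst h2
            subst hs
            have := ih [x] c0 (by simp) hl'
            simpa using this
    · intro s t hst hl
      have hc : c = t.reverse ++ s.reverse := by
        have : c = (s ++ t).reverse := by rw [← hst, List.reverse_reverse]
        simpa [List.reverse_append] using this
      have hl' : 3 ≤ c.length := by simpa using hl
      have := sp_reverse (ih t.reverse s.reverse hc hl')
      simpa [List.reverse_append] using this
  | @grow a b t0 hq ih =>
    intro s' t' hst hl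
    rcases s' with _ | ⟨e1, s1⟩
    · simp only [List.nil_append] at hst
      subst hst
      rcases t0 with _ | ⟨w, t00⟩
      · have h00 : a :: b :: ([] : List ℕ) = [0, 0] :=
          eq_of_length_two hq (by simp)
        injection h00 with h1 h2
        injection h2 with h2 _
        subst h1; subst h2
        simpa using sp_triv
      · have hsp : Sp ([] ++ a :: b :: (w :: t00)) := by
          simpa using ih (a :: b :: w :: t00) [] (by simp) (by simp)
        have := surgery hsp
        simpa using this
    · rcases s1 with _ | ⟨e2, s2⟩
      · simp only [List.cons_append, List.nil_append] at hst
        injection hst with h1 h2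
        subst h1; subst h2
        refine ⟨0, 0, b, a, [], t0, ?_, ?_, ?_⟩
        · simpa using IsQuiddity.base
        · have := swap (s := [a]) (t := b :: t0) (by simpa using hq)
          simpa using this
        · simp
      · rcases s2 with _ | ⟨e3, s3⟩
        · simp only [List.cons_append, List.nil_append] at hst
          injection hst with h1 h2
          injection h2 with h2 h3
          subst h1; subst h2; subst h3
          refine ⟨b, a, 0, 0, t0, [], ?_, ?_, ?_⟩
          · have := swap (s := [a]) (t := b :: t0) (by simpa using hq)
            simpa using this
          · simpa using IsQuiddity.base
          · simp
        · simp only [List.cons_append] at hst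
          injection hst with h1 h2
          injection h2 with h2 h3
          injection h3 with h3 h4
          subst h1; subst h2; subst h3
          subst h4
          rcases s3 with _ | ⟨w, s4⟩
          · rcases t' with _ | ⟨w2, t2'⟩
            · have h00 : a :: b :: ([] ++ [] : List ℕ) = [0, 0] :=
                eq_of_length_two hq (by simp)
              injection h00 with h1 h2
              injection h2 with h2 _
              subst h1; subst h2
              simpa using sp_triv
            · have hsp : Sp ((w2 :: t2') ++ a :: b :: []) :=
                ih (a :: b :: []) (w2 :: t2') (by simp) (by simp)
              have := surgery hsp
              simpa using this
          · have hsp : Sp (t' ++ a :: b :: (w :: s4)) :=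
              ih (a :: b :: w :: s4) t' (by simp) (by simp)
            have := surgery hsp
            simpa using this

end QuidAux

namespace QuidAux

def Good (c : List ℕ) : Prop :=
  c = [0, 0] ∨ c = [1, 1, 1] ∨ c = [1, 2, 1, 2] ∨ c = [2, 1, 2, 1] ∨
  c = [2, 1, 3, 1, 2] ∨
  ∃ f ∈ ([[1,2,2], [1,2,3], [1,2,4], [2,1,3], [2,1,4],
          [2,1,5], [3,1,4], [3,1,5], [1,3,1,3]] : List (List ℕ)),
    f <:+: (c.drop 1).dropLast ∨ f <:+: ((c.drop 1).dropLast).reverse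

instance : ∀ c, Decidable (Good c) := fun c => by unfold Good; infer_instance

lemma shape_eq {uh ul : ℕ} {um : List ℕ} {p : ℕ} {M : List ℕ} {q : ℕ}
    (h : uh :: (um ++ [ul]) = p :: (M ++ [q])) : uh = p ∧ um = M ∧ ul = q := by
  injection h with h1 h2
  refine ⟨h1, ?_, ?_⟩
  · exact (List.append_inj' h2 rfl).1
  · have := (List.append_inj' h2 rfl).2
    injection this

lemma good_aux : ∀ (N : ℕ) (c : List ℕ), IsQuiddity c → c.length ≤ N → Good c := by
  intro N
  induction N with
  | zero => intro c hc hl; have := two_le_length hc; omega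
  | succ N ihN =>
    intro c hc hl
    by_cases h3 : 3 ≤ c.length
    · obtain ⟨uh, ul, vh, vl, um, vm, hu, hv, hceq⟩ := by
        have := split_all hc c [] (by simp) h3
        simpa using this
      have hlen := congrArg List.length hceq
      simp at hlen
      have hlu : (uh :: (um ++ [ul])).length ≤ N := by simp; omega
      have hlv : (vh :: (vm ++ [vl])).length ≤ N := by simp; omega
      have hu' := ihN _ hu hlu
      have hv' := ihN _ hv hlv
      have hmid : (c.drop 1).dropLast = um ++ (ul + vh + 1) :: vm := by
        have h2 : um ++ (ul + vh + 1) :: (vm ++ [vl + 1]) =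
            (um ++ (ul + vh + 1) :: vm) ++ [vl + 1] := by simp
        rw [hceq]
        simp only [List.drop_one, List.tail_cons, h2, List.dropLast_concat]
      have humInf : um <:+: (c.drop 1).dropLast := by
        rw [hmid]; exact ⟨[], (ul + vh + 1) :: vm, by simp⟩
      have hvmInf : vm <:+: (c.drop 1).dropLast := by
        rw [hmid]; exact ⟨um ++ [ul + vh + 1], [], by simp⟩
      have humid : (((uh :: (um ++ [ul])).drop 1)).dropLast = um := by
        simp [List.dropLast_concat]
      have hvmid : (((vh :: (vm ++ [vl])).drop 1)).dropLast = vm := by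
        simp [List.dropLast_concat]
      rcases hu' with h | h | h | h | h | ⟨f, hf, hfi⟩
      · obtain ⟨rfl, rfl, rfl⟩ := shape_eq (h.trans (show ([0, 0] : List ℕ) = 0 :: ([] ++ [0]) from rfl))
        rcases hv' with h' | h' | h' | h' | h' | ⟨f, hf, hfi⟩
        · obtain ⟨rfl, rfl, rfl⟩ := shape_eq (h'.trans (show ([0, 0] : List ℕ) = 0 :: ([] ++ [0]) from rfl))
          subst hceq
          decide
        · obtain ⟨rfl, rfl, rfl⟩ := shape_eq (h'.trans (show ([1, 1, 1] : List ℕ) = 1 :: ([1] ++ [1]) from rfl))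
          subst hceq
          decide
        · obtain ⟨rfl, rfl, rfl⟩ := shape_eq (h'.trans (show ([1, 2, 1, 2] : List ℕ) = 1 :: ([2, 1] ++ [2]) from rfl))
          subst hceq
          decide
        · obtain ⟨rfl, rfl, rfl⟩ := shape_eq (h'.trans (show ([2, 1, 2, 1] : List ℕ) = 2 :: ([1, 2] ++ [1]) from rfl))
          subst hceq
          decide
        · obtain ⟨rfl, rfl, rfl⟩ := shape_eq (h'.trans (show ([2, 1, 3, 1, 2] : List ℕ) = 2 :: ([1, 3, 1] ++ [2]) from rfl))
          subst hceq
          decide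
        · refine Or.inr (Or.inr (Or.inr (Or.inr (Or.inr ⟨f, hf, ?_⟩))))
          rw [hvmid] at hfi
          rcases hfi with hfi | hfi
          · exact Or.inl (hfi.trans hvmInf)
          · exact Or.inr (hfi.trans (List.reverse_infix.mpr hvmInf))
      · obtain ⟨rfl, rfl, rfl⟩ := shape_eq (h.trans (show ([1, 1, 1] : List ℕ) = 1 :: ([1] ++ [1]) from rfl))
        rcases hv' with h' | h' | h' | h' | h' | ⟨f, hf, hfi⟩
        · obtain ⟨rfl, rfl, rfl⟩ := shape_eq (h'.trans (show ([0, 0] : List ℕ) = 0 :: ([] ++ [0]) from rfl))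
          subst hceq
          decide
        · obtain ⟨rfl, rfl, rfl⟩ := shape_eq (h'.trans (show ([1, 1, 1] : List ℕ) = 1 :: ([1] ++ [1]) from rfl))
          subst hceq
          decide
        · obtain ⟨rfl, rfl, rfl⟩ := shape_eq (h'.trans (show ([1, 2, 1, 2] : List ℕ) = 1 :: ([2, 1] ++ [2]) from rfl))
          subst hceq
          decide
        · obtain ⟨rfl, rfl, rfl⟩ := shape_eq (h'.trans (show ([2, 1, 2, 1] : List ℕ) = 2 :: ([1, 2] ++ [1]) from rfl))
          subst hceq
          decide
        · obtain ⟨rfl, rfl, rfl⟩ := shape_eq (h'.trans (show ([2, 1, 3, 1, 2] : List ℕ) = 2 :: ([1, 3, 1] ++ [2]) from rfl))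
          subst hceq
          decide
        · refine Or.inr (Or.inr (Or.inr (Or.inr (Or.inr ⟨f, hf, ?_⟩))))
          rw [hvmid] at hfi
          rcases hfi with hfi | hfi
          · exact Or.inl (hfi.trans hvmInf)
          · exact Or.inr (hfi.trans (List.reverse_infix.mpr hvmInf))
      · obtain ⟨rfl, rfl, rfl⟩ := shape_eq (h.trans (show ([1, 2, 1, 2] : List ℕ) = 1 :: ([2, 1] ++ [2]) from rfl))
        rcases hv' with h' | h' | h' | h' | h' | ⟨f, hf, hfi⟩
        · obtain ⟨rfl, rfl, rfl⟩ := shape_eq (h'.trans (show ([0, 0] : List ℕ) = 0 :: ([] ++ [0]) from rfl))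
          subst hceq
          decide
        · obtain ⟨rfl, rfl, rfl⟩ := shape_eq (h'.trans (show ([1, 1, 1] : List ℕ) = 1 :: ([1] ++ [1]) from rfl))
          subst hceq
          decide
        · obtain ⟨rfl, rfl, rfl⟩ := shape_eq (h'.trans (show ([1, 2, 1, 2] : List ℕ) = 1 :: ([2, 1] ++ [2]) from rfl))
          subst hceq
          decide
        · obtain ⟨rfl, rfl, rfl⟩ := shape_eq (h'.trans (show ([2, 1, 2, 1] : List ℕ) = 2 :: ([1, 2] ++ [1]) from rfl))
          subst hceq
          decide
        · obtain ⟨rfl, rfl, rfl⟩ := shape_eq (h'.trans (show ([2, 1, 3, 1, 2] : List ℕ) = 2 :: ([1, 3, 1] ++ [2]) from rfl))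
          subst hceq
          decide
        · refine Or.inr (Or.inr (Or.inr (Or.inr (Or.inr ⟨f, hf, ?_⟩))))
          rw [hvmid] at hfi
          rcases hfi with hfi | hfi
          · exact Or.inl (hfi.trans hvmInf)
          · exact Or.inr (hfi.trans (List.reverse_infix.mpr hvmInf))
      · obtain ⟨rfl, rfl, rfl⟩ := shape_eq (h.trans (show ([2, 1, 2, 1] : List ℕ) = 2 :: ([1, 2] ++ [1]) from rfl))
        rcases hv' with h' | h' | h' | h' | h' | ⟨f, hf, hfi⟩
        · obtain ⟨rfl, rfl, rfl⟩ := shape_eq (h'.trans (show ([0, 0] : List ℕ) = 0 :: ([] ++ [0]) from rfl))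
          subst hceq
          decide
        · obtain ⟨rfl, rfl, rfl⟩ := shape_eq (h'.trans (show ([1, 1, 1] : List ℕ) = 1 :: ([1] ++ [1]) from rfl))
          subst hceq
          decide
        · obtain ⟨rfl, rfl, rfl⟩ := shape_eq (h'.trans (show ([1, 2, 1, 2] : List ℕ) = 1 :: ([2, 1] ++ [2]) from rfl))
          subst hceq
          decide
        · obtain ⟨rfl, rfl, rfl⟩ := shape_eq (h'.trans (show ([2, 1, 2, 1] : List ℕ) = 2 :: ([1, 2] ++ [1]) from rfl))
          subst hceq
          decide
        · obtain ⟨rfl, rfl, rfl⟩ := shape_eq (h'.trans (show ([2, 1, 3, 1, 2] : List ℕ) = 2 :: ([1, 3, 1] ++ [2]) from rfl))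
          subst hceq
          decide
        · refine Or.inr (Or.inr (Or.inr (Or.inr (Or.inr ⟨f, hf, ?_⟩))))
          rw [hvmid] at hfi
          rcases hfi with hfi | hfi
          · exact Or.inl (hfi.trans hvmInf)
          · exact Or.inr (hfi.trans (List.reverse_infix.mpr hvmInf))
      · obtain ⟨rfl, rfl, rfl⟩ := shape_eq (h.trans (show ([2, 1, 3, 1, 2] : List ℕ) = 2 :: ([1, 3, 1] ++ [2]) from rfl))
        rcases hv' with h' | h' | h' | h' | h' | ⟨f, hf, hfi⟩
        · obtain ⟨rfl, rfl, rfl⟩ := shape_eq (h'.trans (show ([0, 0] : List ℕ) = 0 :: ([] ++ [0]) from rfl))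
          subst hceq
          decide
        · obtain ⟨rfl, rfl, rfl⟩ := shape_eq (h'.trans (show ([1, 1, 1] : List ℕ) = 1 :: ([1] ++ [1]) from rfl))
          subst hceq
          decide
        · obtain ⟨rfl, rfl, rfl⟩ := shape_eq (h'.trans (show ([1, 2, 1, 2] : List ℕ) = 1 :: ([2, 1] ++ [2]) from rfl))
          subst hceq
          decide
        · obtain ⟨rfl, rfl, rfl⟩ := shape_eq (h'.trans (show ([2, 1, 2, 1] : List ℕ) = 2 :: ([1, 2] ++ [1]) from rfl))
          subst hceq
          decide
        · obtain ⟨rfl, rfl, rfl⟩ := shape_eq (h'.trans (show ([2, 1, 3, 1, 2] : List ℕ) = 2 :: ([1, 3, 1] ++ [2]) from rfl))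
          subst hceq
          decide
        · refine Or.inr (Or.inr (Or.inr (Or.inr (Or.inr ⟨f, hf, ?_⟩))))
          rw [hvmid] at hfi
          rcases hfi with hfi | hfi
          · exact Or.inl (hfi.trans hvmInf)
          · exact Or.inr (hfi.trans (List.reverse_infix.mpr hvmInf))
      · refine Or.inr (Or.inr (Or.inr (Or.inr (Or.inr ⟨f, hf, ?_⟩))))
        rw [humid] at hfi
        rcases hfi with hfi | hfi
        · exact Or.inl (hfi.trans humInf)
        · exact Or.inr (hfi.trans (List.reverse_infix.mpr humInf))
    · have h2 := two_le_length hc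
      left
      exact eq_of_length_two hc (by omega)

end QuidAux

/-- If `c = (c₁,…,cₙ)` represents a quiddity cycle, then either `c` is one of
five explicit sequences, or `(c₂,…,cₙ₋₁)` or `(cₙ₋₁,…,c₂)` contains one of nine
explicit sequences as a block of consecutive entries. -/
theorem quiddity_middle_subsequences (c : List ℕ) (hc : IsQuiddity c) :
    c = [0, 0] ∨ c = [1, 1, 1] ∨ c = [1, 2, 1, 2] ∨ c = [2, 1, 2, 1] ∨
    c = [2, 1, 3, 1, 2] ∨
    ∃ f ∈ ([[1,2,2], [1,2,3], [1,2,4], [2,1,3], [2,1,4],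
            [2,1,5], [3,1,4], [3,1,5], [1,3,1,3]] : List (List ℕ)),
      f <:+: (c.drop 1).dropLast ∨ f <:+: ((c.drop 1).dropLast).reverse := by
  exact QuidAux.good_aux c.length c hc le_rfl
end

section
/- Let q = (q_1, q, q_2) ∈ (ℂˣ)³ be a triple for which m_1(q) is defined. Then m_1(σ_1(q)) is also defined, m_1(σ_1(q)) = m_1(q), and σ_1(σ_1(q)) = q. Analogously, if m_2(q) is defined, then m_2(σ_2(q)) is defined, m_2(σ_2(q)) = m_2(q), and σ_2(σ_2(q)) = q. -/
def P (a b : ℂ) : Set ℕ := {m | (∑ k ∈ Finset.range (m + 1), a ^ k) = 0 ∨ a ^ m * b = 1}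

lemma keyP (a b : ℂ) (ha : a ≠ 0) (hb : b ≠ 0) (hne : (P a b).Nonempty) :
    sInf (P a b) ∈ P a ((a ^ (2 * sInf (P a b)))⁻¹ * b⁻¹) ∧
    sInf (P a ((a ^ (2 * sInf (P a b)))⁻¹ * b⁻¹)) = sInf (P a b) := by
  set m := sInf (P a b) with hm
  have hmem : m ∈ P a b := Nat.sInf_mem hne
  have hmin : ∀ k, k < m → k ∉ P a b := fun k hk => Nat.notMem_of_lt_sInf hk
  have hpow : ∀ n : ℕ, a ^ n ≠ 0 := fun n => pow_ne_zero n ha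
  have hmem' : m ∈ P a ((a ^ (2 * m))⁻¹ * b⁻¹) := by
    rcases hmem with hs | hq
    · exact Or.inl hs
    · right
      have e : a ^ (2 * m) * b = a ^ m := by
        rw [two_mul, pow_add]; linear_combination a ^ m * hq
      rw [← mul_inv, e, mul_inv_cancel₀ (hpow m)]
  refine ⟨hmem', le_antisymm (Nat.sInf_le hmem') ?_⟩
  refine le_csInf ⟨m, hmem'⟩ fun k hk => ?_
  by_contra hkm
  push_neg at hkm
  obtain ⟨d, hd⟩ : ∃ d, m = k + (d + 1) := ⟨m - k - 1, by omega⟩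
  rcases hk with hs | hq
  · exact hmin k hkm (Or.inl hs)
  -- hq : a ^ k * ((a ^ (2*m))⁻¹ * b⁻¹) = 1
  have hn : a ^ (m + (d + 1)) * b = 1 := by
    have e : a ^ (2 * m) = a ^ k * a ^ (m + (d + 1)) := by rw [← pow_add]; congr 1; omega
    rw [e] at hq
    field_simp at hq
    have := mul_left_cancel₀ (hpow k)
      (show a ^ k * (a ^ (m + (d + 1)) * b) = a ^ k * 1 by
        rw [hq])
    simpa using this
  rcases hmem with hs | hq2
  · -- sum = 0 case
    by_cases ha1 : a = 1
    · subst ha1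
      simp [Finset.sum_const] at hs
      exact_mod_cast hs
    · rw [geom_sum_eq ha1] at hs
      have hpow1 : a ^ (m + 1) = 1 := by
        have := (div_eq_zero_iff.mp hs).resolve_right (sub_ne_zero.mpr ha1)
        exact sub_eq_zero.mp this
      have hrd : a ^ d * b = 1 := by
        have : a ^ (m + (d + 1)) = a ^ (m + 1) * a ^ d := by rw [← pow_add]; ring_nf
        rw [this, hpow1, one_mul] at hn
        exact hn
      exact hmin d (by omega) (Or.inr hrd)
  · -- a^m * b = 1 case
    have had : a ^ (d + 1) = 1 := by
      have e : a ^ (m + (d + 1)) = a ^ m * a ^ (d + 1) := by rw [← pow_add]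
      rw [e] at hn
      linear_combination hn - a ^ (d + 1) * hq2
    by_cases ha1 : a = 1
    · subst ha1
      simp at hq2
      exact hmin k hkm (Or.inr (by simp [hq2]))
    · refine hmin d (by omega) (Or.inl ?_)
      rw [geom_sum_eq ha1]
      rw [had]
      simp


/-- The defining set for `m₁` of a triple `(q₁, q, q₂)`. -/
def m1Set (t : ℂ × ℂ × ℂ) : Set ℕ :=
  {m | (∑ k ∈ Finset.range (m + 1), t.1 ^ k) = 0 ∨ t.1 ^ m * t.2.1 = 1}

/-- The defining set for `m₂` of a triple `(q₁, q, q₂)`. -/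
def m2Set (t : ℂ × ℂ × ℂ) : Set ℕ :=
  {m | (∑ k ∈ Finset.range (m + 1), t.2.2 ^ k) = 0 ∨ t.2.2 ^ m * t.2.1 = 1}

/-- `m₁(q)` is defined. -/
def M1Defined (t : ℂ × ℂ × ℂ) : Prop := (m1Set t).Nonempty

/-- `m₂(q)` is defined. -/
def M2Defined (t : ℂ × ℂ × ℂ) : Prop := (m2Set t).Nonempty

/-- `m₁(q)`, the minimum of the defining set (junk value `0` if undefined). -/
noncomputable def m1 (t : ℂ × ℂ × ℂ) : ℕ := sInf (m1Set t)

/-- `m₂(q)`, the minimum of the defining set (junk value `0` if undefined). -/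
noncomputable def m2 (t : ℂ × ℂ × ℂ) : ℕ := sInf (m2Set t)

/-- The reflection `σ₁(q₁, q, q₂) = (q₁, q₁^{-2m₁} q⁻¹, q₁^{m₁²} q^{m₁} q₂)`. -/
noncomputable def sigma1 (t : ℂ × ℂ × ℂ) : ℂ × ℂ × ℂ :=
  (t.1, (t.1 ^ (2 * m1 t))⁻¹ * t.2.1⁻¹, t.1 ^ (m1 t ^ 2) * t.2.1 ^ m1 t * t.2.2)

/-- The reflection `σ₂(q₁, q, q₂) = (q₁ q^{m₂} q₂^{m₂²}, q₂^{-2m₂} q⁻¹, q₂)`. -/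
noncomputable def sigma2 (t : ℂ × ℂ × ℂ) : ℂ × ℂ × ℂ :=
  (t.1 * t.2.1 ^ m2 t * t.2.2 ^ (m2 t ^ 2), (t.2.2 ^ (2 * m2 t))⁻¹ * t.2.1⁻¹, t.2.2)

/-- If `m₁(q)` is defined for a triple of nonzero complex numbers, then
`m₁(σ₁(q))` is defined, equals `m₁(q)`, and `σ₁(σ₁(q)) = q`; analogously
for `m₂` and `σ₂`. -/
theorem sigma_involutive (q₁ q q₂ : ℂ) (h₁ : q₁ ≠ 0) (h : q ≠ 0) (h₂ : q₂ ≠ 0) :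
    (M1Defined (q₁, q, q₂) →
      M1Defined (sigma1 (q₁, q, q₂)) ∧ m1 (sigma1 (q₁, q, q₂)) = m1 (q₁, q, q₂) ∧
      sigma1 (sigma1 (q₁, q, q₂)) = (q₁, q, q₂)) ∧
    (M2Defined (q₁, q, q₂) →
      M2Defined (sigma2 (q₁, q, q₂)) ∧ m2 (sigma2 (q₁, q, q₂)) = m2 (q₁, q, q₂) ∧
      sigma2 (sigma2 (q₁, q, q₂)) = (q₁, q, q₂)) := by
  constructor
  · intro hdef
    have hne : (P q₁ q).Nonempty := hdef
    obtain ⟨hmem', hinf⟩ := keyP q₁ q h₁ h hne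
    set m := sInf (P q₁ q) with hmdef
    have hmm : m1 (q₁, q, q₂) = m := rfl
    have hs1 : sigma1 (q₁, q, q₂)
        = (q₁, (q₁ ^ (2 * m))⁻¹ * q⁻¹, q₁ ^ (m ^ 2) * q ^ m * q₂) := rfl
    have hm1' : m1 (sigma1 (q₁, q, q₂)) = m := hinf
    refine ⟨⟨m, hmem'⟩, by rw [hm1', hmm], ?_⟩
    rw [hs1] at hm1' ⊢
    simp only [sigma1]
    rw [hm1']
    have hp : ∀ (x : ℂ) (n : ℕ), x ≠ 0 → x ^ n ≠ 0 := fun x n hx => pow_ne_zero n hx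
    have e : ((q₁ ^ (2 * m))⁻¹ * q⁻¹) ^ m = (q₁ ^ (m ^ 2) * q₁ ^ (m ^ 2) * q ^ m)⁻¹ := by
      rw [mul_pow, inv_pow, inv_pow, ← pow_mul, ← mul_inv]
      congr 2
      rw [← pow_add]
      congr 1
      ring
    refine Prod.ext rfl (Prod.ext ?_ ?_) <;> simp only
    · field_simp
    · rw [e]
      field_simp
  · intro hdef
    have hne : (P q₂ q).Nonempty := hdef
    obtain ⟨hmem', hinf⟩ := keyP q₂ q h₂ h hne
    set m := sInf (P q₂ q) with hmdef
    have hmm : m2 (q₁, q, q₂) = m := rfl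
    have hs2 : sigma2 (q₁, q, q₂)
        = (q₁ * q ^ m * q₂ ^ (m ^ 2), (q₂ ^ (2 * m))⁻¹ * q⁻¹, q₂) := rfl
    have hm2' : m2 (sigma2 (q₁, q, q₂)) = m := hinf
    refine ⟨⟨m, hmem'⟩, by rw [hm2', hmm], ?_⟩
    rw [hs2] at hm2' ⊢
    simp only [sigma2]
    rw [hm2']
    have e : ((q₂ ^ (2 * m))⁻¹ * q⁻¹) ^ m = (q₂ ^ (m ^ 2) * q₂ ^ (m ^ 2) * q ^ m)⁻¹ := by
      rw [mul_pow, inv_pow, inv_pow, ← pow_mul, ← mul_inv]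
      congr 2
      rw [← pow_add]
      congr 1
      ring
    refine Prod.ext ?_ (Prod.ext ?_ rfl) <;> simp only
    · rw [e]
      field_simp
    · field_simp
end
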